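/- For every x on the unit sphere S^{n-1} in R^n and every real λ, with N_λ(x) = (1 + λ(1 − 3x_n^2))^2, one has N_λ(x)^{1/2} = 1 + λ(1 − 3x_n^2) = (Γ((2n+1)/4) / (2 π^{(n-1)/2} Γ(3/4))) · ∫_{S^{n-1}} |⟨x,ξ⟩|^{1/2} · ( 1 + 7λ − (6n+3) λ ξ_n^2 ) dξ, provided |λ(1 − 3x_n^2)| < 1 so that the square root of N_λ(x) equals 1 + λ(1 − 3x_n^2). -/

import Mathlib

set_option maxHeartbeats 2000000

open MeasureTheory Real Finset
open scoped RealInnerProductSpace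

namespace SphereStmt9



lemma gammaIoi (q : ℝ) (hq : -1 < q) :
    ∫ r in Set.Ioi (0:ℝ), r ^ q * rexp (-r^2) = Gamma ((q+1)/2) / 2 := by
  have h := integral_rpow_mul_exp_neg_rpow (p := 2) (q := q) two_pos hq
  rw [show ∫ r in Set.Ioi (0:ℝ), r ^ q * rexp (-r^2)
      = ∫ r in Set.Ioi (0:ℝ), r ^ q * rexp (-r ^ (2:ℝ)) from
    setIntegral_congr_fun measurableSet_Ioi (fun r hr => by
      rw [Real.rpow_two]), h]
  ring

lemma evenInt (q : ℝ) (hq : -1 < q) :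
    ∫ t : ℝ, |t| ^ q * rexp (-t^2) = Gamma ((q+1)/2) := by
  have h : ∀ t : ℝ, |t| ^ q * rexp (-t^2) = (fun s : ℝ => s ^ q * rexp (-s^2)) |t| := by
    intro t; simp only [sq_abs]
  simp_rw [h]
  rw [integral_comp_abs (f := fun s : ℝ => s ^ q * rexp (-s^2)), gammaIoi q hq]
  ring

lemma integrable_of_even_Ioi {g : ℝ → ℝ} (hmeas : AEStronglyMeasurable g volume)
    (heven : ∀ t : ℝ, g (-t) = g t) (h : IntegrableOn g (Set.Ioi 0)) : Integrable g := by
  have int_Iic : IntegrableOn g (Set.Iic 0) := by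
    rw [← Measure.map_neg_eq_self (volume : Measure ℝ)]
    have m : MeasurableEmbedding fun x : ℝ => -x := (Homeomorph.neg ℝ).measurableEmbedding
    rw [m.integrableOn_map_iff]
    have : (fun x : ℝ => -x) ⁻¹' Set.Iic 0 = Set.Ici 0 := by
      ext y; simp
    rw [this]
    have hcg : g ∘ (fun x : ℝ => -x) = g := by
      funext y; simp [Function.comp, heven]
    rw [hcg]
    exact Iff.mpr integrableOn_Ici_iff_integrableOn_Ioi h
  rw [← integrableOn_univ, ← Set.Iic_union_Ioi (a := (0:ℝ)), integrableOn_union]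
  exact ⟨int_Iic, h⟩

lemma intA (s : ℝ) (hs : -1 < s) : Integrable (fun t : ℝ => |t| ^ s * rexp (-t ^ 2)) := by
  have hm : Measurable fun t : ℝ => |t| ^ s * rexp (-t ^ 2) := by
    exact ((by measurability : Measurable fun t : ℝ => |t| ^ s).mul (by fun_prop))
  refine integrable_of_even_Ioi hm.aestronglyMeasurable (fun t => by simp) ?_
  have h := integrableOn_rpow_mul_exp_neg_mul_sq one_pos hs
  refine (h.congr_fun (fun t ht => ?_) measurableSet_Ioi)
  rw [abs_of_pos ht]
  simp only [neg_one_mul]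

lemma hint (s : ℝ) (hs : 0 ≤ s) (m : ℕ) :
    Integrable (fun t : ℝ => |t| ^ s * t ^ m * rexp (-t ^ 2)) := by
  have hmm : Measurable fun t : ℝ => |t| ^ s * t ^ m * rexp (-t ^ 2) := by
    exact ((by measurability : Measurable fun t : ℝ => |t| ^ s).mul (by fun_prop)).mul (by fun_prop)
  rcases eq_or_ne (s + m) 0 with h0 | h0
  · have hmr : (m : ℝ) = 0 := by
      have h1 : (0:ℝ) ≤ (m:ℝ) := Nat.cast_nonneg m
      linarith
    have hm0 : m = 0 := by exact_mod_cast hmr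
    have hs0 : s = 0 := by rw [hm0] at h0; simpa using h0
    subst hm0; subst hs0
    simp only [Real.rpow_zero, pow_zero, one_mul, mul_one]
    have := integrable_exp_neg_mul_sq (b := (1:ℝ)) one_pos
    simpa using this
  · have hsm : -1 < s + m := by
      have h1 : (0:ℝ) ≤ (m:ℝ) := Nat.cast_nonneg m
      linarith
    refine (intA (s + m) hsm).mono' hmm.aestronglyMeasurable ?_
    filter_upwards with t
    rw [Real.norm_eq_abs, abs_mul, abs_mul, abs_of_nonneg (exp_pos _).le,
      abs_of_nonneg (Real.rpow_nonneg (abs_nonneg t) s), abs_pow,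
      Real.rpow_add' (abs_nonneg t) h0, Real.rpow_natCast]

lemma oddInt (s : ℝ) : ∫ t : ℝ, |t| ^ s * t * rexp (-t^2) = 0 := by
  have h := integral_neg_eq_self (fun t : ℝ => |t| ^ s * t * rexp (-t^2)) volume
  simp only [abs_neg, neg_sq, mul_neg, neg_mul] at h
  rw [integral_neg] at h
  linarith

lemma gaussInt : ∫ t : ℝ, rexp (-t^2) = √π := by
  simpa using integral_gaussian 1

lemma sqInt : ∫ t : ℝ, t^2 * rexp (-t^2) = √π / 2 := by
  have h : ∀ t : ℝ, t^2 * rexp (-t^2) = |t| ^ (2:ℝ) * rexp (-t^2) := by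
    intro t
    rw [← sq_abs t, ← Real.rpow_natCast |t| 2]
    norm_num
  simp_rw [h]
  rw [evenInt 2 (by norm_num)]
  rw [show ((2:ℝ)+1)/2 = 1/2 + 1 by norm_num, Gamma_add_one (by norm_num), Gamma_one_half_eq]
  ring

lemma halfInt : ∫ t : ℝ, |t| ^ ((1:ℝ)/2) * rexp (-t^2) = Gamma (3/4) := by
  rw [evenInt _ (by norm_num)]; norm_num

lemma fiveHalfInt : ∫ t : ℝ, |t| ^ ((1:ℝ)/2) * t^2 * rexp (-t^2) = (3/4) * Gamma (3/4) := by
  have h : ∀ t : ℝ, |t| ^ ((1:ℝ)/2) * t^2 * rexp (-t^2) = |t| ^ ((5:ℝ)/2) * rexp (-t^2) := by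
    intro t
    rw [show (5:ℝ)/2 = 1/2 + 2 by norm_num, Real.rpow_add' (abs_nonneg t) (by norm_num)]
    norm_num [Real.rpow_two, sq_abs]
  simp_rw [h]
  rw [evenInt _ (by norm_num), show ((5:ℝ)/2+1)/2 = 3/4 + 1 by norm_num,
    Gamma_add_one (by norm_num)]




lemma ray (m : ℕ) (f : ℝ → ℝ) (hf : Measurable f) :
    ∫ r : (Set.Ioi (0:ℝ)), f r ∂(Measure.volumeIoiPow m)
      = ∫ r in Set.Ioi (0:ℝ), r ^ m * f r := by
  rw [Measure.volumeIoiPow]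
  simp only [ENNReal.ofReal]
  rw [integral_withDensity_eq_integral_smul
      ((measurable_subtype_coe.pow_const _).real_toNNReal) (fun r : Set.Ioi (0:ℝ) => f r),
    integral_subtype_comap measurableSet_Ioi (fun a : ℝ => Real.toNNReal (a ^ m) • f a)]
  refine setIntegral_congr_fun measurableSet_Ioi (fun r hr => ?_)
  rw [NNReal.smul_def, Real.coe_toNNReal _ (pow_nonneg (le_of_lt hr) _)]
  rfl

lemma polar {n : ℕ} (hn : 1 ≤ n) (H : EuclideanSpace ℝ (Fin n) → ℝ)
    (G : Metric.sphere (0 : EuclideanSpace ℝ (Fin n)) 1 → ℝ) (f : ℝ → ℝ)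
    (hf : Measurable f)
    (hH : ∀ z : ({0}ᶜ : Set (EuclideanSpace ℝ (Fin n))),
      H z = G ((homeomorphUnitSphereProd (EuclideanSpace ℝ (Fin n))) z).1
        * f ‖(z : EuclideanSpace ℝ (Fin n))‖) :
    ∫ y, H y = (∫ ξ, G ξ ∂((volume : Measure (EuclideanSpace ℝ (Fin n))).toSphere))
      * ∫ r in Set.Ioi (0:ℝ), r ^ (n - 1) * f r := by
  haveI : Nontrivial (EuclideanSpace ℝ (Fin n)) :=
    Module.nontrivial_of_finrank_pos (R := ℝ)
      (by rw [finrank_euclideanSpace_fin]; omega)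
  have h1 : ∫ y, H y ∂(volume : Measure (EuclideanSpace ℝ (Fin n)))
      = ∫ z : ({0}ᶜ : Set (EuclideanSpace ℝ (Fin n))), H z
          ∂(Measure.comap Subtype.val volume) := by
    rw [integral_subtype_comap (measurableSet_singleton 0).compl,
      MeasureTheory.restrict_compl_singleton]
  have h2 := (Measure.measurePreserving_homeomorphUnitSphereProd
      (volume : Measure (EuclideanSpace ℝ (Fin n)))).integral_comp
      (Homeomorph.measurableEmbedding _)
      (fun p : Metric.sphere (0 : EuclideanSpace ℝ (Fin n)) 1 × Set.Ioi (0:ℝ) =>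
        G p.1 * f p.2)
  rw [finrank_euclideanSpace_fin] at h2
  have h3 : ∫ z : ({0}ᶜ : Set (EuclideanSpace ℝ (Fin n))), H z
        ∂(Measure.comap Subtype.val volume)
      = ∫ z : ({0}ᶜ : Set (EuclideanSpace ℝ (Fin n))),
          G ((homeomorphUnitSphereProd (EuclideanSpace ℝ (Fin n))) z).1
            * f ((homeomorphUnitSphereProd (EuclideanSpace ℝ (Fin n))) z).2
          ∂(Measure.comap Subtype.val volume) := by
    refine integral_congr_ae (Filter.Eventually.of_forall (fun z => ?_))
    simpa using hH z
  rw [h1, h3, h2, integral_prod_mul G (fun r : Set.Ioi (0:ℝ) => f r), ray (n-1) f hf]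





lemma exists_basis {n : ℕ} (hn : 0 < n) (u : EuclideanSpace ℝ (Fin n)) (hu : ‖u‖ = 1) :
    ∃ b : OrthonormalBasis (Fin n) ℝ (EuclideanSpace ℝ (Fin n)), b ⟨0, hn⟩ = u := by
  have card : Module.finrank ℝ (EuclideanSpace ℝ (Fin n)) = Fintype.card (Fin n) := by
    rw [finrank_euclideanSpace_fin, Fintype.card_fin]
  have hv : Orthonormal ℝ (Set.restrict ({(⟨0, hn⟩ : Fin n)} : Set (Fin n)) (fun _ => u)) := by
    constructor
    · intro i; exact hu
    · intro i j hij
      exfalso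
      refine hij (Subtype.ext ?_)
      have hi := i.2; have hj := j.2
      simp only [Set.mem_singleton_iff] at hi hj
      rw [hi, hj]
  obtain ⟨b, hb⟩ := hv.exists_orthonormalBasis_extension_of_card_eq card
  exact ⟨b, hb _ rfl⟩

lemma euclid_pi {n : ℕ} (g : Fin n → ℝ → ℝ) :
    ∫ z : EuclideanSpace ℝ (Fin n), ∏ i, g i (z i) = ∏ i, ∫ t : ℝ, g i t := by
  have h := (EuclideanSpace.volume_preserving_symm_measurableEquiv_toLp (Fin n)).integral_comp
      (MeasurableEquiv.measurableEmbedding _) (fun w : Fin n → ℝ => ∏ i, g i (w i))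
  rw [← MeasureTheory.integral_fintype_prod_eq_prod (ι := Fin n) g, ← volume_pi, ← h]
  rfl

lemma norm_sq_eq {n : ℕ} (z : EuclideanSpace ℝ (Fin n)) : ‖z‖^2 = ∑ i, z i ^ 2 := by
  rw [EuclideanSpace.norm_eq, Real.sq_sqrt (by positivity)]
  simp [Real.norm_eq_abs, sq_abs]

lemma gaussA {n : ℕ} (hn : 0 < n) (u : EuclideanSpace ℝ (Fin n)) (hu : ‖u‖ = 1) :
    ∫ y : EuclideanSpace ℝ (Fin n), |⟪u, y⟫| ^ ((1:ℝ)/2) * rexp (-‖y‖^2)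
      = Gamma (3/4) * √π ^ (n - 1) := by
  obtain ⟨b, hb⟩ := exists_basis hn u hu
  set j0 : Fin n := ⟨0, hn⟩ with hj0
  have h1 := (b.measurePreserving_repr_symm).integral_comp
      (b.repr.symm.toHomeomorph.measurableEmbedding)
      (fun y : EuclideanSpace ℝ (Fin n) => |⟪u, y⟫| ^ ((1:ℝ)/2) * rexp (-‖y‖^2))
  rw [← h1]
  have h2 : ∀ z : EuclideanSpace ℝ (Fin n),
      |⟪u, b.repr.symm z⟫| ^ ((1:ℝ)/2) * rexp (-‖b.repr.symm z‖^2)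
        = ∏ i, ((if i = j0 then |z i| ^ ((1:ℝ)/2) else 1) * rexp (-(z i)^2)) := by
    intro z
    have hinner : ⟪u, b.repr.symm z⟫ = z j0 := by
      conv_lhs => rw [← hb]
      rw [← OrthonormalBasis.repr_apply_apply, LinearIsometryEquiv.apply_symm_apply]
    have hnorm : ‖b.repr.symm z‖^2 = ∑ i, z i ^ 2 := by
      rw [LinearIsometryEquiv.norm_map, norm_sq_eq]
    rw [hinner, hnorm, Finset.prod_mul_distrib, Finset.prod_ite_eq' univ j0
      (fun i => |z i| ^ ((1:ℝ)/2)), if_pos (mem_univ j0), ← Real.exp_sum]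
    simp
  rw [integral_congr_ae (Filter.Eventually.of_forall h2),
    euclid_pi (fun i t => (if i = j0 then |t| ^ ((1:ℝ)/2) else 1) * rexp (-t^2))]
  rw [← Finset.mul_prod_erase univ _ (mem_univ j0)]
  have hj0val : ∫ t : ℝ, ((if j0 = j0 then |t| ^ ((1:ℝ)/2) else 1) * rexp (-t^2))
      = Gamma (3/4) := by
    simp only [if_pos rfl]
    exact halfInt
  have hoth : ∀ i ∈ univ.erase j0,
      (∫ t : ℝ, ((if i = j0 then |t| ^ ((1:ℝ)/2) else 1) * rexp (-t^2))) = √π := by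
    intro i hi
    have hne : ¬ (i = j0) := Finset.ne_of_mem_erase hi
    simp only [hne, if_false, one_mul]
    exact gaussInt
  rw [hj0val, Finset.prod_congr rfl hoth, Finset.prod_const,
    Finset.card_erase_of_mem (mem_univ j0), Finset.card_univ, Fintype.card_fin]





lemma euclid_pi_integrable {n : ℕ} (g : Fin n → ℝ → ℝ) (hg : ∀ i, Integrable (g i)) :
    Integrable (fun z : EuclideanSpace ℝ (Fin n) => ∏ i, g i (z i)) := by
  have h : Integrable (fun w : Fin n → ℝ => ∏ i, g i (w i)) :=
    MeasureTheory.Integrable.fintype_prod (f := g) hg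
  exact ((EuclideanSpace.volume_preserving_symm_measurableEquiv_toLp (Fin n)).integrable_comp_emb
    (MeasurableEquiv.measurableEmbedding _)).mpr h

/-- The per-coordinate factor. -/
noncomputable def P {n : ℕ} (j0 i j : Fin n) : Fin n → ℝ → ℝ := fun k t =>
  (if k = j0 then |t| ^ ((1:ℝ)/2) else 1)
    * t ^ ((if k = i then 1 else 0) + (if k = j then 1 else 0)) * rexp (-t^2)

lemma P_integrable {n : ℕ} (j0 i j k : Fin n) : Integrable (P j0 i j k) := by
  unfold P
  by_cases h : k = j0
  · simp only [h, if_pos rfl]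
    exact hint (1/2) (by norm_num) _
  · simp only [h, if_false]
    have := hint 0 le_rfl ((if k = i then 1 else 0) + (if k = j then 1 else 0))
    simpa using this

lemma P_prod {n : ℕ} (j0 i j : Fin n) (z : EuclideanSpace ℝ (Fin n)) :
    ∏ k, P j0 i j k (z k)
      = |z j0| ^ ((1:ℝ)/2) * (z i * z j) * rexp (-‖z‖^2) := by
  unfold P
  rw [Finset.prod_mul_distrib, Finset.prod_mul_distrib]
  have h1 : ∏ k, (if k = j0 then |z k| ^ ((1:ℝ)/2) else 1) = |z j0| ^ ((1:ℝ)/2) := by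
    rw [Finset.prod_ite_eq' univ j0 (fun k => |z k| ^ ((1:ℝ)/2)), if_pos (mem_univ j0)]
  have h2 : ∏ k, z k ^ ((if k = i then 1 else 0) + (if k = j then 1 else 0)) = z i * z j := by
    have : ∀ k ∈ univ, z k ^ ((if k = i then 1 else 0) + (if k = j then 1 else 0))
        = (if k = i then z k else 1) * (if k = j then z k else 1) := by
      intro k _
      rw [pow_add]
      congr 1 <;> split_ifs <;> simp
    rw [Finset.prod_congr rfl this, Finset.prod_mul_distrib,
      Finset.prod_ite_eq' univ i (fun k => z k), Finset.prod_ite_eq' univ j (fun k => z k),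
      if_pos (mem_univ i), if_pos (mem_univ j)]
  have h3 : ∏ k, rexp (-(z k)^2) = rexp (-‖z‖^2) := by
    rw [norm_sq_eq, ← Real.exp_sum]
    congr 1
    rw [← Finset.sum_neg_distrib]
  rw [h1, h2, h3]

lemma gaussB {n : ℕ} (hn : 0 < n) (u v : EuclideanSpace ℝ (Fin n)) (hu : ‖u‖ = 1)
    (hv : ‖v‖ = 1) :
    ∫ y : EuclideanSpace ℝ (Fin n), |⟪u, y⟫| ^ ((1:ℝ)/2) * ⟪v, y⟫^2 * rexp (-‖y‖^2)
      = √π ^ (n - 1) * Gamma (3/4) * ((3/4) * ⟪u,v⟫^2 + (1 - ⟪u,v⟫^2) / 2) := by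
  obtain ⟨b, hb⟩ := exists_basis hn u hu
  set j0 : Fin n := ⟨0, hn⟩ with hj0
  set w : EuclideanSpace ℝ (Fin n) := b.repr v with hw
  -- transfer the integral through the isometry
  have h1 := (b.measurePreserving_repr_symm).integral_comp
      (b.repr.symm.toHomeomorph.measurableEmbedding)
      (fun y : EuclideanSpace ℝ (Fin n) => |⟪u, y⟫| ^ ((1:ℝ)/2) * ⟪v, y⟫^2 * rexp (-‖y‖^2))
  rw [← h1]
  -- pointwise rewrite
  have hpt : ∀ z : EuclideanSpace ℝ (Fin n),
      |⟪u, b.repr.symm z⟫| ^ ((1:ℝ)/2) * ⟪v, b.repr.symm z⟫^2 * rexp (-‖b.repr.symm z‖^2)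
        = ∑ i, ∑ j, (w i * w j) * ∏ k, P j0 i j k (z k) := by
    intro z
    have hinner : ⟪u, b.repr.symm z⟫ = z j0 := by
      conv_lhs => rw [← hb]
      rw [← OrthonormalBasis.repr_apply_apply, LinearIsometryEquiv.apply_symm_apply]
    have hvin : ⟪v, b.repr.symm z⟫ = ∑ i, w i * z i := by
      rw [← LinearIsometryEquiv.inner_map_map b.repr v (b.repr.symm z),
        LinearIsometryEquiv.apply_symm_apply]
      rw [PiLp.inner_apply]
      simp [RCLike.inner_apply, hw, mul_comm]
    have hnorm : ‖b.repr.symm z‖ = ‖z‖ := LinearIsometryEquiv.norm_map _ _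
    rw [hinner, hvin, hnorm]
    have hsq : (∑ i, w i * z i)^2 = ∑ i, ∑ j, (w i * z i) * (w j * z j) := by
      rw [sq, Finset.sum_mul_sum]
    rw [hsq, Finset.mul_sum, Finset.sum_mul]
    refine Finset.sum_congr rfl (fun i _ => ?_)
    rw [Finset.mul_sum, Finset.sum_mul]
    refine Finset.sum_congr rfl (fun j _ => ?_)
    rw [P_prod]
    ring
  rw [integral_congr_ae (Filter.Eventually.of_forall hpt)]
  -- swap integral and sums
  have hQint : ∀ i j : Fin n, Integrable
      (fun z : EuclideanSpace ℝ (Fin n) => ∏ k, P j0 i j k (z k)) :=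
    fun i j => euclid_pi_integrable _ (P_integrable j0 i j)
  rw [integral_finset_sum univ (fun i _ =>
    integrable_finset_sum univ (fun j _ => ((hQint i j).const_mul _)))]
  have hswap : ∀ i : Fin n,
      (∫ z : EuclideanSpace ℝ (Fin n), ∑ j, (w i * w j) * ∏ k, P j0 i j k (z k))
        = ∑ j, (w i * w j) * ∏ k, ∫ t, P j0 i j k t := by
    intro i
    rw [integral_finset_sum univ (fun j _ => ((hQint i j).const_mul _))]
    refine Finset.sum_congr rfl (fun j _ => ?_)
    rw [integral_const_mul, euclid_pi (P j0 i j)]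
  rw [Finset.sum_congr rfl (fun i _ => hswap i)]
  -- off-diagonal terms vanish
  have hoff : ∀ i j : Fin n, i ≠ j → (∏ k, ∫ t, P j0 i j k t) = 0 := by
    intro i j hij
    refine Finset.prod_eq_zero (mem_univ i) ?_
    unfold P
    simp only [if_pos rfl, hij, if_false]
    by_cases h : i = j0
    · simp only [h, if_pos rfl]
      have := oddInt (1/2)
      simpa [pow_one] using this
    · simp only [h, if_false]
      have := oddInt 0
      simp only [Real.rpow_zero, one_mul] at this
      simpa [pow_one] using this
  -- reduce to diagonal
  have hdiag : ∀ i : Fin n,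
      (∑ j, (w i * w j) * ∏ k, ∫ t, P j0 i j k t)
        = w i ^ 2 * ∏ k, ∫ t, P j0 i i k t := by
    intro i
    rw [Finset.sum_eq_single i]
    · ring
    · intro j _ hji
      rw [hoff i j (Ne.symm hji), mul_zero]
    · intro h; exact absurd (mem_univ i) h
  rw [Finset.sum_congr rfl (fun i _ => hdiag i)]
  -- compute diagonal products
  have hd0 : (∏ k, ∫ t, P j0 j0 j0 k t) = (3/4) * Gamma (3/4) * √π ^ (n - 1) := by
    rw [← Finset.mul_prod_erase univ _ (mem_univ j0)]
    have hj0v : (∫ t, P j0 j0 j0 j0 t) = (3/4) * Gamma (3/4) := by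
      unfold P
      simp only [if_pos rfl]
      have := fiveHalfInt
      simpa [pow_add, pow_one] using this
    have hoth : ∀ k ∈ univ.erase j0, (∫ t, P j0 j0 j0 k t) = √π := by
      intro k hk
      have hne : ¬ (k = j0) := Finset.ne_of_mem_erase hk
      unfold P
      simp only [hne, if_false, one_mul, pow_zero, add_zero, mul_one]
      exact gaussInt
    rw [hj0v, Finset.prod_congr rfl hoth, Finset.prod_const,
      Finset.card_erase_of_mem (mem_univ j0), Finset.card_univ, Fintype.card_fin]
  have hdi : ∀ i : Fin n, i ≠ j0 →
      (∏ k, ∫ t, P j0 i i k t) = Gamma (3/4) * √π ^ (n - 1) / 2 := by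
    intro i hi
    have hn2 : 2 ≤ n := by
      have h1 : i.val ≠ 0 := fun h => hi (Fin.ext h)
      have := i.2
      omega
    rw [← Finset.mul_prod_erase univ _ (mem_univ j0)]
    have hj0v : (∫ t, P j0 i i j0 t) = Gamma (3/4) := by
      unfold P
      have hne : ¬ (j0 = i) := fun h => hi h.symm
      simp only [if_pos rfl, hne, if_false, add_zero, pow_zero, mul_one]
      exact halfInt
    have hiv : (∫ t, P j0 i i i t) = √π / 2 := by
      unfold P
      have hne : ¬ (i = j0) := hi
      simp only [hne, if_false, if_pos rfl, one_mul]
      have := sqInt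
      simpa [pow_add, pow_one] using this
    have hmem : i ∈ univ.erase j0 := Finset.mem_erase.mpr ⟨hi, mem_univ i⟩
    rw [← Finset.mul_prod_erase _ _ hmem]
    have hoth : ∀ k ∈ (univ.erase j0).erase i, (∫ t, P j0 i i k t) = √π := by
      intro k hk
      have hne1 : ¬ (k = i) := Finset.ne_of_mem_erase hk
      have hne2 : ¬ (k = j0) := Finset.ne_of_mem_erase (Finset.mem_of_mem_erase hk)
      unfold P
      simp only [hne1, hne2, if_false, one_mul, pow_zero, add_zero, mul_one]
      exact gaussInt
    rw [hj0v, hiv, Finset.prod_congr rfl hoth, Finset.prod_const,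
      Finset.card_erase_of_mem hmem, Finset.card_erase_of_mem (mem_univ j0),
      Finset.card_univ, Fintype.card_fin]
    have hpow : √π * √π ^ (n - 1 - 1) = √π ^ (n - 1) := by
      rw [← pow_succ']
      congr 1
      omega
    rw [← hpow]
    ring
  -- split the sum
  rw [← Finset.add_sum_erase univ _ (mem_univ j0), hd0]
  rw [Finset.sum_congr rfl (fun i hi => by
    rw [hdi i (Finset.ne_of_mem_erase hi)])]
  rw [← Finset.sum_mul]
  have hsum : (∑ i ∈ univ.erase j0, w i ^ 2) = 1 - w j0 ^ 2 := by
    rw [Finset.sum_erase_eq_sub (mem_univ j0)]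
    congr 1
    have : ∑ i, w i ^ 2 = ‖w‖ ^ 2 := (norm_sq_eq w).symm
    rw [this, hw, LinearIsometryEquiv.norm_map, hv]
    norm_num
  rw [hsum]
  have hwj0 : w j0 = ⟪u, v⟫ := by
    rw [hw, OrthonormalBasis.repr_apply_apply, hb]
  rw [hwj0]
  ring





lemma ray_half {n : ℕ} (hn : 1 ≤ n) :
    ∫ r in Set.Ioi (0:ℝ), r ^ (n-1) * (r ^ ((1:ℝ)/2) * rexp (-r^2))
      = Gamma ((2*(n:ℝ)+1)/4) / 2 := by
  have hcong : ∀ r ∈ Set.Ioi (0:ℝ), r ^ (n-1) * (r ^ ((1:ℝ)/2) * rexp (-r^2))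
      = r ^ (((n-1 : ℕ):ℝ) + 1/2) * rexp (-r^2) := by
    intro r hr
    rw [Real.rpow_add hr, Real.rpow_natCast]
    ring
  rw [setIntegral_congr_fun measurableSet_Ioi hcong, gammaIoi _ (by
      have h0 : (0:ℝ) ≤ ((n-1:ℕ):ℝ) := Nat.cast_nonneg _
      linarith)]
  congr 2
  push_cast [Nat.cast_sub hn]
  ring

lemma ray_fivehalf {n : ℕ} (hn : 1 ≤ n) :
    ∫ r in Set.Ioi (0:ℝ), r ^ (n-1) * (r ^ ((5:ℝ)/2) * rexp (-r^2))
      = Gamma ((2*(n:ℝ)+5)/4) / 2 := by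
  have hcong : ∀ r ∈ Set.Ioi (0:ℝ), r ^ (n-1) * (r ^ ((5:ℝ)/2) * rexp (-r^2))
      = r ^ (((n-1 : ℕ):ℝ) + 5/2) * rexp (-r^2) := by
    intro r hr
    rw [Real.rpow_add hr, Real.rpow_natCast]
    ring
  rw [setIntegral_congr_fun measurableSet_Ioi hcong, gammaIoi _ (by
      have h0 : (0:ℝ) ≤ ((n-1:ℕ):ℝ) := Nat.cast_nonneg _
      linarith)]
  congr 2
  push_cast [Nat.cast_sub hn]
  ring

lemma sphereA {n : ℕ} (hn : 1 ≤ n) (u : EuclideanSpace ℝ (Fin n)) (hu : ‖u‖ = 1) :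
    (∫ ξ : Metric.sphere (0 : EuclideanSpace ℝ (Fin n)) 1,
        |⟪u, (ξ : EuclideanSpace ℝ (Fin n))⟫| ^ ((1:ℝ)/2) ∂(volume.toSphere))
      * (Gamma ((2*(n:ℝ)+1)/4) / 2) = Gamma (3/4) * √π ^ (n - 1) := by
  have hH : ∀ z : ({0}ᶜ : Set (EuclideanSpace ℝ (Fin n))),
      |⟪u, (z : EuclideanSpace ℝ (Fin n))⟫| ^ ((1:ℝ)/2)
          * rexp (-‖(z : EuclideanSpace ℝ (Fin n))‖^2)
        = (fun ξ : Metric.sphere (0 : EuclideanSpace ℝ (Fin n)) 1 =>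
            |⟪u, (ξ : EuclideanSpace ℝ (Fin n))⟫| ^ ((1:ℝ)/2))
            ((homeomorphUnitSphereProd (EuclideanSpace ℝ (Fin n))) z).1
          * (fun r : ℝ => r ^ ((1:ℝ)/2) * rexp (-r^2)) ‖(z : EuclideanSpace ℝ (Fin n))‖ := by
    intro z
    have hz : (z : EuclideanSpace ℝ (Fin n)) ≠ 0 := z.2
    have hnz : (0:ℝ) < ‖(z : EuclideanSpace ℝ (Fin n))‖ := norm_pos_iff.mpr hz
    simp only [homeomorphUnitSphereProd_apply_fst_coe]
    rw [real_inner_smul_right, abs_mul, abs_of_nonneg (inv_nonneg.mpr (norm_nonneg _)),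
      Real.mul_rpow (inv_nonneg.mpr (norm_nonneg _)) (abs_nonneg _)]
    have e1 : (‖(z : EuclideanSpace ℝ (Fin n))‖⁻¹) ^ ((1:ℝ)/2)
        * ‖(z : EuclideanSpace ℝ (Fin n))‖ ^ ((1:ℝ)/2) = 1 := by
      rw [← Real.mul_rpow (inv_nonneg.mpr (norm_nonneg _)) (norm_nonneg _),
        inv_mul_cancel₀ (ne_of_gt hnz), Real.one_rpow]
    linear_combination (-(|⟪u, (z : EuclideanSpace ℝ (Fin n))⟫| ^ ((1:ℝ)/2)
      * rexp (-‖(z : EuclideanSpace ℝ (Fin n))‖^2))) * e1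
  have hp := polar hn
    (fun y : EuclideanSpace ℝ (Fin n) => |⟪u, y⟫| ^ ((1:ℝ)/2) * rexp (-‖y‖^2))
    (fun ξ : Metric.sphere (0 : EuclideanSpace ℝ (Fin n)) 1 =>
      |⟪u, (ξ : EuclideanSpace ℝ (Fin n))⟫| ^ ((1:ℝ)/2))
    (fun r : ℝ => r ^ ((1:ℝ)/2) * rexp (-r^2)) (by fun_prop) hH
  rw [ray_half hn] at hp
  rw [← hp]
  exact gaussA hn u hu

lemma sphereB {n : ℕ} (hn : 1 ≤ n) (u v : EuclideanSpace ℝ (Fin n)) (hu : ‖u‖ = 1)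
    (hv : ‖v‖ = 1) :
    (∫ ξ : Metric.sphere (0 : EuclideanSpace ℝ (Fin n)) 1,
        |⟪u, (ξ : EuclideanSpace ℝ (Fin n))⟫| ^ ((1:ℝ)/2)
          * ⟪v, (ξ : EuclideanSpace ℝ (Fin n))⟫^2 ∂(volume.toSphere))
      * (Gamma ((2*(n:ℝ)+5)/4) / 2)
      = √π ^ (n - 1) * Gamma (3/4) * ((3/4) * ⟪u,v⟫^2 + (1 - ⟪u,v⟫^2) / 2) := by
  have hH : ∀ z : ({0}ᶜ : Set (EuclideanSpace ℝ (Fin n))),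
      |⟪u, (z : EuclideanSpace ℝ (Fin n))⟫| ^ ((1:ℝ)/2)
          * ⟪v, (z : EuclideanSpace ℝ (Fin n))⟫^2
          * rexp (-‖(z : EuclideanSpace ℝ (Fin n))‖^2)
        = (fun ξ : Metric.sphere (0 : EuclideanSpace ℝ (Fin n)) 1 =>
            |⟪u, (ξ : EuclideanSpace ℝ (Fin n))⟫| ^ ((1:ℝ)/2)
              * ⟪v, (ξ : EuclideanSpace ℝ (Fin n))⟫^2)
            ((homeomorphUnitSphereProd (EuclideanSpace ℝ (Fin n))) z).1
          * (fun r : ℝ => r ^ ((5:ℝ)/2) * rexp (-r^2)) ‖(z : EuclideanSpace ℝ (Fin n))‖ := by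
    intro z
    have hz : (z : EuclideanSpace ℝ (Fin n)) ≠ 0 := z.2
    have hnz : (0:ℝ) < ‖(z : EuclideanSpace ℝ (Fin n))‖ := norm_pos_iff.mpr hz
    simp only [homeomorphUnitSphereProd_apply_fst_coe]
    rw [real_inner_smul_right u, real_inner_smul_right v, abs_mul,
      abs_of_nonneg (inv_nonneg.mpr (norm_nonneg _)),
      Real.mul_rpow (inv_nonneg.mpr (norm_nonneg _)) (abs_nonneg _), mul_pow]
    have hsplit : ‖(z : EuclideanSpace ℝ (Fin n))‖ ^ ((5:ℝ)/2)
        = ‖(z : EuclideanSpace ℝ (Fin n))‖ ^ ((1:ℝ)/2)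
          * ‖(z : EuclideanSpace ℝ (Fin n))‖ ^ 2 := by
      rw [show (5:ℝ)/2 = 1/2 + 2 by norm_num, Real.rpow_add hnz, Real.rpow_two]
    rw [hsplit]
    have e1 : (‖(z : EuclideanSpace ℝ (Fin n))‖⁻¹) ^ ((1:ℝ)/2)
        * ‖(z : EuclideanSpace ℝ (Fin n))‖ ^ ((1:ℝ)/2) = 1 := by
      rw [← Real.mul_rpow (inv_nonneg.mpr (norm_nonneg _)) (norm_nonneg _),
        inv_mul_cancel₀ (ne_of_gt hnz), Real.one_rpow]
    have e2 : (‖(z : EuclideanSpace ℝ (Fin n))‖⁻¹)^2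
        * ‖(z : EuclideanSpace ℝ (Fin n))‖^2 = 1 := by
      rw [← mul_pow, inv_mul_cancel₀ (ne_of_gt hnz), one_pow]
    have e3 : (‖(z : EuclideanSpace ℝ (Fin n))‖⁻¹) ^ ((1:ℝ)/2)
        * ‖(z : EuclideanSpace ℝ (Fin n))‖ ^ ((1:ℝ)/2)
        * ((‖(z : EuclideanSpace ℝ (Fin n))‖⁻¹)^2
          * ‖(z : EuclideanSpace ℝ (Fin n))‖^2) = 1 := by
      rw [e1, e2, one_mul]
    linear_combination (-(|⟪u, (z : EuclideanSpace ℝ (Fin n))⟫| ^ ((1:ℝ)/2)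
      * ⟪v, (z : EuclideanSpace ℝ (Fin n))⟫^2
      * rexp (-‖(z : EuclideanSpace ℝ (Fin n))‖^2))) * e3
  have hp := polar hn
    (fun y : EuclideanSpace ℝ (Fin n) =>
      |⟪u, y⟫| ^ ((1:ℝ)/2) * ⟪v, y⟫^2 * rexp (-‖y‖^2))
    (fun ξ : Metric.sphere (0 : EuclideanSpace ℝ (Fin n)) 1 =>
      |⟪u, (ξ : EuclideanSpace ℝ (Fin n))⟫| ^ ((1:ℝ)/2)
        * ⟪v, (ξ : EuclideanSpace ℝ (Fin n))⟫^2)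
    (fun r : ℝ => r ^ ((5:ℝ)/2) * rexp (-r^2)) (by fun_prop) hH
  rw [ray_fivehalf hn] at hp
  rw [← hp]
  exact gaussB hn u v hu hv


end SphereStmt9

open SphereStmt9 in
theorem stmt9 (n : ℕ) (hn : 1 ≤ n) (lam : ℝ) (hlam0 : 0 < lam) (hlam1 : lam < 1 / 2)
    (x : EuclideanSpace ℝ (Fin n)) (hx : x ∈ Metric.sphere (0 : EuclideanSpace ℝ (Fin n)) 1)
    (hsmall : |lam * (1 - 3 * x ⟨n - 1, by omega⟩ ^ 2)| < 1) :
    ((1 + lam * (1 - 3 * x ⟨n - 1, by omega⟩ ^ 2)) ^ 2) ^ ((1 : ℝ) / 2)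
        = 1 + lam * (1 - 3 * x ⟨n - 1, by omega⟩ ^ 2) ∧
      1 + lam * (1 - 3 * x ⟨n - 1, by omega⟩ ^ 2) =
        Real.Gamma ((2 * n + 1) / 4) / (2 * Real.pi ^ ((n - 1 : ℝ) / 2) * Real.Gamma (3 / 4)) *
          ∫ ξ : Metric.sphere (0 : EuclideanSpace ℝ (Fin n)) 1,
            |⟪x, (ξ : EuclideanSpace ℝ (Fin n))⟫| ^ ((1 : ℝ) / 2) *
              (1 + 7 * lam - (6 * n + 3) * lam * (ξ : EuclideanSpace ℝ (Fin n)) ⟨n - 1, by omega⟩ ^ 2)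
            ∂(volume.toSphere) := by
  have hk : n - 1 < n := by omega
  constructor
  · have habs := abs_lt.mp hsmall
    have ht : (0:ℝ) ≤ 1 + lam * (1 - 3 * x ⟨n - 1, by omega⟩ ^ 2) := by linarith [habs.1]
    rw [← Real.sqrt_eq_rpow, Real.sqrt_sq ht]
  · set k : Fin n := ⟨n - 1, hk⟩ with hkdef
    have key : 1 + lam * (1 - 3 * x k ^ 2) =
        Gamma ((2 * (n:ℝ) + 1) / 4) / (2 * π ^ (((n:ℝ) - 1) / 2) * Gamma (3 / 4)) *
          ∫ ξ : Metric.sphere (0 : EuclideanSpace ℝ (Fin n)) 1,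
            |⟪x, (ξ : EuclideanSpace ℝ (Fin n))⟫| ^ ((1 : ℝ) / 2) *
              (1 + 7 * lam - (6 * (n:ℝ) + 3) * lam * (ξ : EuclideanSpace ℝ (Fin n)) k ^ 2)
            ∂(volume.toSphere) := by
      have hx1 : ‖x‖ = 1 := mem_sphere_zero_iff_norm.mp hx
      set v : EuclideanSpace ℝ (Fin n) := EuclideanSpace.single k (1:ℝ) with hvdef
      have hv1 : ‖v‖ = 1 := by rw [hvdef, EuclideanSpace.norm_single]; norm_num
      have EA := sphereA hn x hx1
      have EB := sphereB hn x v hx1 hv1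
      have hxv : ⟪x, v⟫ = x k := by
        rw [hvdef, EuclideanSpace.inner_single_right]
        simp
      rw [hxv] at EB
      have hvxi : ∀ ξ : Metric.sphere (0 : EuclideanSpace ℝ (Fin n)) 1,
          ⟪v, (ξ : EuclideanSpace ℝ (Fin n))⟫ = (ξ : EuclideanSpace ℝ (Fin n)) k := by
        intro ξ
        rw [hvdef, EuclideanSpace.inner_single_left]
        simp
      -- integrability of the two sphere integrands
      have hc1 : Continuous (fun ξ : Metric.sphere (0 : EuclideanSpace ℝ (Fin n)) 1 =>
          |⟪x, (ξ : EuclideanSpace ℝ (Fin n))⟫| ^ ((1:ℝ)/2)) :=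
        ((continuous_const.inner continuous_subtype_val).abs).rpow_const
          (fun _ => Or.inr (by norm_num))
      have hc2 : Continuous (fun ξ : Metric.sphere (0 : EuclideanSpace ℝ (Fin n)) 1 =>
          |⟪x, (ξ : EuclideanSpace ℝ (Fin n))⟫| ^ ((1:ℝ)/2)
            * ⟪v, (ξ : EuclideanSpace ℝ (Fin n))⟫ ^ 2) :=
        hc1.mul ((continuous_const.inner continuous_subtype_val).pow 2)
      have int1 : Integrable (fun ξ : Metric.sphere (0 : EuclideanSpace ℝ (Fin n)) 1 =>
          |⟪x, (ξ : EuclideanSpace ℝ (Fin n))⟫| ^ ((1:ℝ)/2))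
          ((volume : Measure (EuclideanSpace ℝ (Fin n))).toSphere) := by
        rw [← integrableOn_univ]
        exact hc1.continuousOn.integrableOn_compact isCompact_univ
      have int2 : Integrable (fun ξ : Metric.sphere (0 : EuclideanSpace ℝ (Fin n)) 1 =>
          |⟪x, (ξ : EuclideanSpace ℝ (Fin n))⟫| ^ ((1:ℝ)/2)
            * ⟪v, (ξ : EuclideanSpace ℝ (Fin n))⟫ ^ 2)
          ((volume : Measure (EuclideanSpace ℝ (Fin n))).toSphere) := by
        rw [← integrableOn_univ]
        exact hc2.continuousOn.integrableOn_compact isCompact_univ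
      have hpt : ∀ ξ : Metric.sphere (0 : EuclideanSpace ℝ (Fin n)) 1,
          |⟪x, (ξ : EuclideanSpace ℝ (Fin n))⟫| ^ ((1 : ℝ) / 2) *
              (1 + 7 * lam - (6 * (n:ℝ) + 3) * lam * (ξ : EuclideanSpace ℝ (Fin n)) k ^ 2)
            = (1 + 7 * lam) * (|⟪x, (ξ : EuclideanSpace ℝ (Fin n))⟫| ^ ((1 : ℝ) / 2))
              - ((6 * (n:ℝ) + 3) * lam) * (|⟪x, (ξ : EuclideanSpace ℝ (Fin n))⟫| ^ ((1 : ℝ) / 2)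
                * ⟪v, (ξ : EuclideanSpace ℝ (Fin n))⟫ ^ 2) := by
        intro ξ
        rw [hvxi ξ]
        ring
      have hsplit : (∫ ξ : Metric.sphere (0 : EuclideanSpace ℝ (Fin n)) 1,
            |⟪x, (ξ : EuclideanSpace ℝ (Fin n))⟫| ^ ((1 : ℝ) / 2) *
              (1 + 7 * lam - (6 * (n:ℝ) + 3) * lam * (ξ : EuclideanSpace ℝ (Fin n)) k ^ 2)
            ∂(volume.toSphere))
          = (1 + 7 * lam) * (∫ ξ : Metric.sphere (0 : EuclideanSpace ℝ (Fin n)) 1,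
              |⟪x, (ξ : EuclideanSpace ℝ (Fin n))⟫| ^ ((1 : ℝ) / 2) ∂(volume.toSphere))
            - ((6 * (n:ℝ) + 3) * lam) * (∫ ξ : Metric.sphere (0 : EuclideanSpace ℝ (Fin n)) 1,
              |⟪x, (ξ : EuclideanSpace ℝ (Fin n))⟫| ^ ((1 : ℝ) / 2)
                * ⟪v, (ξ : EuclideanSpace ℝ (Fin n))⟫ ^ 2 ∂(volume.toSphere)) := by
        rw [integral_congr_ae (Filter.Eventually.of_forall hpt),
          integral_sub (int1.const_mul _) (int2.const_mul _), integral_const_mul,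
          integral_const_mul]
      rw [hsplit]
      -- numeric facts
      have hGa : (0:ℝ) < Gamma ((2 * (n:ℝ) + 1) / 4) :=
        Gamma_pos_of_pos (by positivity)
      have hGa' : Gamma ((2 * (n:ℝ) + 1) / 4) ≠ 0 := ne_of_gt hGa
      have hD : Gamma ((3:ℝ)/4) ≠ 0 := ne_of_gt (Gamma_pos_of_pos (by norm_num))
      have hP0 : (0:ℝ) < √π := Real.sqrt_pos.mpr pi_pos
      have hP : (√π : ℝ) ^ (n-1) ≠ 0 := pow_ne_zero _ (ne_of_gt hP0)
      have h2n1 : (2 * (n:ℝ) + 1) ≠ 0 := by positivity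
      have hGb : Gamma ((2 * (n:ℝ) + 5) / 4) =
          ((2 * (n:ℝ) + 1) / 4) * Gamma ((2 * (n:ℝ) + 1) / 4) := by
        rw [show (2 * (n:ℝ) + 5) / 4 = (2 * (n:ℝ) + 1) / 4 + 1 by ring,
          Gamma_add_one (by positivity)]
      rw [hGb] at EB
      have hI0 : (∫ ξ : Metric.sphere (0 : EuclideanSpace ℝ (Fin n)) 1,
            |⟪x, (ξ : EuclideanSpace ℝ (Fin n))⟫| ^ ((1 : ℝ) / 2) ∂(volume.toSphere))
          = 2 * (Gamma (3/4) * √π ^ (n-1)) / Gamma ((2 * (n:ℝ) + 1) / 4) := by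
        rw [eq_div_iff hGa']
        linear_combination 2 * EA
      have hI2 : (∫ ξ : Metric.sphere (0 : EuclideanSpace ℝ (Fin n)) 1,
            |⟪x, (ξ : EuclideanSpace ℝ (Fin n))⟫| ^ ((1 : ℝ) / 2)
              * ⟪v, (ξ : EuclideanSpace ℝ (Fin n))⟫ ^ 2 ∂(volume.toSphere))
          = 8 * (√π ^ (n-1) * Gamma (3/4) * ((3/4) * x k ^ 2 + (1 - x k ^ 2)/2))
              / (Gamma ((2 * (n:ℝ) + 1) / 4) * (2 * (n:ℝ) + 1)) := by
        rw [eq_div_iff (mul_ne_zero hGa' h2n1)]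
        linear_combination 8 * EB
      have hpi : (π : ℝ) ^ (((n:ℝ) - 1) / 2) = √π ^ (n - 1) := by
        rw [Real.sqrt_eq_rpow, ← Real.rpow_natCast (π ^ ((1:ℝ)/2)) (n-1),
          ← Real.rpow_mul pi_pos.le]
        congr 1
        push_cast [Nat.cast_sub hn]
        ring
      rw [hI0, hI2, hpi]
      field_simp
      ring
    exact key
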